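/- For the log-reparametrized uniform model g_t = f_{e^t} where f_θ = θ^{-1} 1_{[0,θ]}, one has h²(g_t, g_{t'}) = 1 - e^{-|t' - t|/2} for all real t, t'. Moreover, if log m ≤ t, t' ≤ log M with 0 < m ≤ M, then ((1 - √(m/M)) / log(M/m)) |t' - t| ≤ h²(g_t, g_{t'}) ≤ (1/2) |t' - t| (the lower bound being read as 0 ≤ h² when m = M). -/

import Mathlib

open MeasureTheory Real

noncomputable def hSq (f g : ℝ → ℝ) : ℝ :=
  (1/2) * ∫ x : ℝ, (Real.sqrt (f x) - Real.sqrt (g x))^2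

noncomputable def unif (θ : ℝ) (x : ℝ) : ℝ :=
  if 0 ≤ x ∧ x ≤ θ then θ⁻¹ else 0

lemma key (a b : ℝ) (ha : 0 < a) (hab : a ≤ b) :
    hSq (unif a) (unif b) = 1 - Real.sqrt a / Real.sqrt b := by
  have hb : 0 < b := lt_of_lt_of_le ha hab
  set c1 : ℝ := (Real.sqrt a⁻¹ - Real.sqrt b⁻¹)^2 with hc1
  have hae : (fun x : ℝ => (Real.sqrt (unif a x) - Real.sqrt (unif b x))^2)
      =ᵐ[volume] fun x => (Set.Ioc 0 a).indicator (fun _ => c1) x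
        + (Set.Ioc a b).indicator (fun _ => b⁻¹) x := by
    have h0 : (volume : Measure ℝ) {(0:ℝ)} = 0 := measure_singleton 0
    rw [Filter.eventuallyEq_iff_exists_mem]
    refine ⟨{(0:ℝ)}ᶜ, by rwa [mem_ae_iff, compl_compl], ?_⟩
    intro x hx
    simp only [Set.mem_compl_iff, Set.mem_singleton_iff] at hx
    simp only [unif, Set.indicator_apply, Set.mem_Ioc]
    rcases le_or_gt x 0 with h | h
    · have hx0 : ¬ (0 ≤ x) := fun h' => hx (le_antisymm h h')
      have hx1 : ¬ (0 < x) := not_lt.2 h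
      have hx2 : ¬ (a < x) := not_lt.2 (h.trans ha.le)
      simp [hx0, hx1, hx2, Real.sqrt_zero]
    · rcases le_or_gt x a with h2 | h2
      · simp [h.le, h2, h2.trans hab, h, hc1]
      · rcases le_or_gt x b with h3 | h3
        · simp [h.le, h2, h3, not_le.2 h2, Real.sqrt_zero, Real.sq_sqrt (inv_nonneg.2 hb.le), Real.sq_sqrt hb.le]
        · simp [not_le.2 h2, not_le.2 h3, Real.sqrt_zero]
  have i1 : Integrable ((Set.Ioc (0:ℝ) a).indicator (fun _ => c1)) volume :=
    (integrable_indicator_iff measurableSet_Ioc).2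
      (integrableOn_const measure_Ioc_lt_top.ne)
  have i2 : Integrable ((Set.Ioc a b).indicator (fun _ => b⁻¹)) volume :=
    (integrable_indicator_iff measurableSet_Ioc).2
      (integrableOn_const measure_Ioc_lt_top.ne)
  have hint : ∫ x : ℝ, (Real.sqrt (unif a x) - Real.sqrt (unif b x))^2
      = c1 * a + b⁻¹ * (b - a) := by
    rw [integral_congr_ae hae, integral_add i1 i2,
      integral_indicator_const _ measurableSet_Ioc,
      integral_indicator_const _ measurableSet_Ioc,
      Real.volume_real_Ioc_of_le ha.le, Real.volume_real_Ioc_of_le hab]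
    simp [mul_comm]
  rw [hSq, hint, hc1, Real.sqrt_inv, Real.sqrt_inv]
  have hsa : Real.sqrt a * Real.sqrt a = a := Real.mul_self_sqrt ha.le
  have hsb : Real.sqrt b * Real.sqrt b = b := Real.mul_self_sqrt hb.le
  have hsa0 : 0 < Real.sqrt a := Real.sqrt_pos.2 ha
  have hsb0 : 0 < Real.sqrt b := Real.sqrt_pos.2 hb
  have e1 : (Real.sqrt a)⁻¹ * (Real.sqrt a)⁻¹ * a = 1 := by
    rw [← mul_inv, hsa, inv_mul_cancel₀ ha.ne']
  have e4 : (Real.sqrt b)⁻¹ * (Real.sqrt b)⁻¹ * a = b⁻¹ * a := by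
    rw [← mul_inv, hsb]
  have e3 : (Real.sqrt a)⁻¹ * a = Real.sqrt a := by
    rw [inv_mul_eq_div, Real.div_sqrt]
  have e2 : b⁻¹ * b = 1 := inv_mul_cancel₀ hb.ne'
  have e5 : Real.sqrt a / Real.sqrt b = Real.sqrt a * (Real.sqrt b)⁻¹ := div_eq_mul_inv _ _
  linear_combination (e1 - 2*(Real.sqrt b)⁻¹ * e3 + e4 + e2)/2 - e5

theorem stmt4 (m M : ℝ) (hm : 0 < m) (hmM : m ≤ M) :
    (∀ t t' : ℝ,
      hSq (unif (Real.exp t)) (unif (Real.exp t')) = 1 - Real.exp (-|t' - t| / 2)) ∧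
    (∀ t t' : ℝ, Real.log m ≤ t → t ≤ Real.log M → Real.log m ≤ t' → t' ≤ Real.log M →
      ((1 - Real.sqrt (m / M)) / Real.log (M / m)) * |t' - t| ≤
          hSq (unif (Real.exp t)) (unif (Real.exp t')) ∧
        hSq (unif (Real.exp t)) (unif (Real.exp t')) ≤ (1 / 2) * |t' - t|) := by
  have hcomm : ∀ f g : ℝ → ℝ, hSq f g = hSq g f := by
    intro f g
    unfold hSq
    congr 1
    exact integral_congr_ae (Filter.Eventually.of_forall fun x => by ring)
  have main : ∀ t t' : ℝ,
      hSq (unif (Real.exp t)) (unif (Real.exp t')) = 1 - Real.exp (-|t' - t| / 2) := by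
    have aux : ∀ t t' : ℝ, t ≤ t' →
        hSq (unif (Real.exp t)) (unif (Real.exp t')) = 1 - Real.exp (-|t' - t| / 2) := by
      intro t t' h
      rw [key _ _ (Real.exp_pos t) (Real.exp_le_exp.2 h), ← Real.exp_half, ← Real.exp_half,
        ← Real.exp_sub, abs_of_nonneg (by linarith : (0:ℝ) ≤ t' - t)]
      ring_nf
    intro t t'
    rcases le_total t t' with h | h
    · exact aux t t' h
    · rw [hcomm, aux t' t h, abs_sub_comm]
  refine ⟨main, fun t t' h1 h2 h3 h4 => ?_⟩
  rw [main t t']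
  set s := |t' - t| with hs
  have hs0 : 0 ≤ s := abs_nonneg _
  constructor
  · -- lower bound
    set L := Real.log (M / m) with hL
    have hM : 0 < M := lt_of_lt_of_le hm hmM
    have hLval : L = Real.log M - Real.log m := Real.log_div hM.ne' hm.ne'
    have hL0 : 0 ≤ L := by rw [hLval]; linarith [Real.log_le_log hm hmM]
    have hsL : s ≤ L := by
      rw [hs, hLval, abs_sub_le_iff]; constructor <;> linarith
    have hsqrt : Real.sqrt (m / M) = Real.exp (-L / 2) := by
      rw [Real.exp_half, Real.exp_neg, hL, Real.exp_log (div_pos hM hm), inv_div]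
    rw [hsqrt]
    rcases eq_or_lt_of_le hs0 with h0 | h0
    · simp [← h0, mul_comm]
    · have hLpos : 0 < L := lt_of_lt_of_le h0 hsL
      set u := s / L with hu
      have hu0 : 0 ≤ u := div_nonneg hs0 hL0
      have hu1 : u ≤ 1 := (div_le_one hLpos).2 hsL
      have hconv := convexOn_exp.2 (Set.mem_univ (0:ℝ)) (Set.mem_univ (-L/2))
        (by linarith : (0:ℝ) ≤ 1 - u) hu0 (by ring)
      simp only [smul_eq_mul, mul_zero, zero_add] at hconv
      have huL : u * (-L / 2) = -s / 2 := by
        field_simp [hu]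
        rw [hu, div_mul_cancel₀ _ hLpos.ne']
      rw [huL, Real.exp_zero] at hconv
      have : u * (1 - Real.exp (-L/2)) ≤ 1 - Real.exp (-s/2) := by nlinarith
      calc (1 - Real.exp (-L / 2)) / L * s = u * (1 - Real.exp (-L/2)) := by
            rw [hu]; ring
        _ ≤ 1 - Real.exp (-s/2) := this
  · -- upper bound
    have := Real.add_one_le_exp (-s / 2)
    linarith
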